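/- Let a_T be a positive function of T and let Υ_T = { (u,y) ∈ ℝ²×ℝ : |u₁u₂|·y ≤ a_T, max(|u₁|,|u₂|) ≤ 1/2, 1 ≤ y ≤ T }. Then for all sufficiently large T, ∫_{[0,1)²} |Λ_x ∩ Υ_T| dx = ∑_{q=1}^{⌊T⌋} Vol₂({ u ∈ ℝ² : |u₁u₂| ≤ a_T/q, max(|u₁|,|u₂|) ≤ 1/2 }), and this sum is ≪ (ln T)·a_T·(1 − ln(4a_T)) + (ln T)²·a_T when 4a_T ≤ 1. -/

import Mathlib

open MeasureTheory
open Set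
open scoped ENNReal


lemma tsum_indicator_Ico (q : ℤ) (hq : 0 < q) (y : ℝ) :
    ∑' p : ℤ, (Ico (p : ℝ) ((p : ℝ) + (q : ℝ))).indicator (1 : ℝ → ℝ≥0∞) y
      = (q.toNat : ℝ≥0∞) := by
  have key : ∀ p : ℤ, y ∈ Ico (p:ℝ) ((p:ℝ) + (q:ℝ)) ↔ p ∈ Finset.Ioc (⌊y⌋ - q) ⌊y⌋ := by
    intro p
    rw [Set.mem_Ico, Finset.mem_Ioc, sub_lt_iff_lt_add, Int.le_floor,
      show (p:ℝ) + (q:ℝ) = ((p + q : ℤ) : ℝ) by push_cast; ring, ← Int.floor_lt]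
    exact and_comm
  rw [tsum_eq_sum (s := Finset.Ioc (⌊y⌋ - q) ⌊y⌋)
      (fun p hp => Set.indicator_of_notMem (fun hm => hp ((key p).mp hm)) _),
    Finset.sum_congr rfl (fun p hp => Set.indicator_of_mem ((key p).mpr hp) _),
    Finset.sum_const, Int.card_Ioc]
  simp

lemma map_affine (q : ℝ) (hq : q ≠ 0) (p : ℝ) :
    Measure.map (fun x : ℝ => q * x + p) volume
      = ENNReal.ofReal |q⁻¹| • volume := by
  have : (fun x : ℝ => q * x + p) = (fun y : ℝ => y + p) ∘ (fun x => q * x) := rfl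
  rw [this, ← Measure.map_map (measurable_add_const p) (measurable_const_mul q),
    Real.map_volume_mul_left hq, Measure.map_smul, map_add_right_eq_self]

lemma smul_prod_apply (c d : ℝ≥0∞) {A : Set (ℝ × ℝ)} (hA : MeasurableSet A) :
    ((c • (volume : Measure ℝ)).prod (d • (volume : Measure ℝ))) A
      = c * d * ((volume : Measure ℝ).prod volume) A := by
  rw [Measure.prod_apply hA, Measure.prod_apply hA]
  simp only [Measure.smul_apply, smul_eq_mul]
  rw [lintegral_smul_measure, lintegral_const_mul d (measurable_measure_prodMk_left hA)]
  ring

lemma volume_preimage_affine {q : ℝ} (hq : q ≠ 0) (p₁ p₂ : ℝ) {A : Set (ℝ × ℝ)}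
    (hA : MeasurableSet A) :
    volume ((fun x : ℝ × ℝ => (q * x.1 + p₁, q * x.2 + p₂)) ⁻¹' A)
      = ENNReal.ofReal |q⁻¹| * ENNReal.ofReal |q⁻¹| * volume A := by
  have hF : (fun x : ℝ × ℝ => (q * x.1 + p₁, q * x.2 + p₂))
      = Prod.map (fun x => q * x + p₁) (fun x => q * x + p₂) := rfl
  have hm1 : Measurable (fun x : ℝ => q * x + p₁) := by fun_prop
  have hm2 : Measurable (fun x : ℝ => q * x + p₂) := by fun_prop
  have := Measure.map_prod_map (f := fun x : ℝ => q * x + p₁)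
    (g := fun x : ℝ => q * x + p₂) volume volume hm1 hm2
  rw [map_affine q hq p₁, map_affine q hq p₂] at this
  rw [Measure.volume_eq_prod, ← Measure.map_apply (by rw [hF]; exact hm1.prodMap hm2) hA,
    hF, ← this, smul_prod_apply _ _ hA, ← Measure.volume_eq_prod]

lemma indicator_prod_one' {s t : Set ℝ} (y : ℝ × ℝ) :
    (s ×ˢ t).indicator (1 : ℝ × ℝ → ℝ≥0∞) y
      = s.indicator (1 : ℝ → ℝ≥0∞) y.1 * t.indicator (1 : ℝ → ℝ≥0∞) y.2 := by
  by_cases h1 : y.1 ∈ s <;> by_cases h2 : y.2 ∈ t <;>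
    simp [Set.indicator_apply, Set.mem_prod, h1, h2]

lemma unfold_sum (q : ℤ) (hq : 0 < q) {S : Set (ℝ × ℝ)} (hS : MeasurableSet S) :
    ∑' p : ℤ × ℤ, volume ((Ico (0:ℝ) 1 ×ˢ Ico (0:ℝ) 1) ∩
        (fun x : ℝ × ℝ => ((q:ℝ) * x.1 + (p.1:ℝ), (q:ℝ) * x.2 + (p.2:ℝ))) ⁻¹' S)
      = volume S := by
  have hq0 : (0:ℝ) < (q:ℝ) := by exact_mod_cast hq
  have hqne : (q:ℝ) ≠ 0 := ne_of_gt hq0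
  -- Step 1: rewrite each summand
  have step1 : ∀ p : ℤ × ℤ,
      (Ico (0:ℝ) 1 ×ˢ Ico (0:ℝ) 1) ∩
        (fun x : ℝ × ℝ => ((q:ℝ) * x.1 + (p.1:ℝ), (q:ℝ) * x.2 + (p.2:ℝ))) ⁻¹' S
      = (fun x : ℝ × ℝ => ((q:ℝ) * x.1 + (p.1:ℝ), (q:ℝ) * x.2 + (p.2:ℝ))) ⁻¹'
          ((Ico ((p.1:ℝ)) ((p.1:ℝ) + (q:ℝ)) ×ˢ Ico ((p.2:ℝ)) ((p.2:ℝ) + (q:ℝ))) ∩ S) := by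
    intro p
    rw [Set.preimage_inter]
    congr 1
    ext x
    simp only [Set.mem_prod, Set.mem_Ico, Set.mem_preimage]
    constructor
    · rintro ⟨⟨h1, h2⟩, h3, h4⟩
      constructor
      · constructor
        · nlinarith
        · nlinarith
      · constructor
        · nlinarith
        · nlinarith
    · rintro ⟨⟨h1, h2⟩, h3, h4⟩
      constructor
      · constructor
        · nlinarith
        · nlinarith [(mul_lt_mul_iff_right₀ hq0).mp (by linarith : (q:ℝ) * x.1 < (q:ℝ) * 1)]
      · constructor
        · nlinarith
        · nlinarith [(mul_lt_mul_iff_right₀ hq0).mp (by linarith : (q:ℝ) * x.2 < (q:ℝ) * 1)]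
  -- measurability of big boxes
  have hBB : ∀ p : ℤ × ℤ, MeasurableSet
      (Ico ((p.1:ℝ)) ((p.1:ℝ) + (q:ℝ)) ×ˢ Ico ((p.2:ℝ)) ((p.2:ℝ) + (q:ℝ))) :=
    fun p => measurableSet_Ico.prod measurableSet_Ico
  -- Step 2: apply volume_preimage_affine
  have step2 : ∀ p : ℤ × ℤ,
      volume ((Ico (0:ℝ) 1 ×ˢ Ico (0:ℝ) 1) ∩
        (fun x : ℝ × ℝ => ((q:ℝ) * x.1 + (p.1:ℝ), (q:ℝ) * x.2 + (p.2:ℝ))) ⁻¹' S)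
      = ENNReal.ofReal |(q:ℝ)⁻¹| * ENNReal.ofReal |(q:ℝ)⁻¹| *
          volume ((Ico ((p.1:ℝ)) ((p.1:ℝ) + (q:ℝ)) ×ˢ Ico ((p.2:ℝ)) ((p.2:ℝ) + (q:ℝ))) ∩ S) := by
    intro p
    rw [step1 p, volume_preimage_affine hqne _ _ ((hBB p).inter hS)]
  simp_rw [step2]
  rw [ENNReal.tsum_mul_left]
  -- Step 3: the tsum of box-volumes
  have step3 : ∑' p : ℤ × ℤ,
      volume ((Ico ((p.1:ℝ)) ((p.1:ℝ) + (q:ℝ)) ×ˢ Ico ((p.2:ℝ)) ((p.2:ℝ) + (q:ℝ))) ∩ S)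
      = (q.toNat : ℝ≥0∞) * (q.toNat : ℝ≥0∞) * volume S := by
    have e1 : ∀ p : ℤ × ℤ,
        volume ((Ico ((p.1:ℝ)) ((p.1:ℝ) + (q:ℝ)) ×ˢ Ico ((p.2:ℝ)) ((p.2:ℝ) + (q:ℝ))) ∩ S)
        = ∫⁻ y, (Ico ((p.1:ℝ)) ((p.1:ℝ) + (q:ℝ)) ×ˢ
            Ico ((p.2:ℝ)) ((p.2:ℝ) + (q:ℝ))).indicator (1 : ℝ × ℝ → ℝ≥0∞) y
            ∂(volume.restrict S) := by
      intro p
      rw [lintegral_indicator_one (hBB p), Measure.restrict_apply (hBB p)]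
    simp_rw [e1]
    rw [← lintegral_tsum (f := fun (p : ℤ × ℤ) (y : ℝ × ℝ) =>
      (Ico ((p.1:ℝ)) ((p.1:ℝ) + (q:ℝ)) ×ˢ Ico ((p.2:ℝ)) ((p.2:ℝ) + (q:ℝ))).indicator
        (1 : ℝ × ℝ → ℝ≥0∞) y)
      (fun p => (measurable_one.indicator (hBB p)).aemeasurable)]
    have e2 : ∀ y : ℝ × ℝ, ∑' p : ℤ × ℤ,
        (Ico ((p.1:ℝ)) ((p.1:ℝ) + (q:ℝ)) ×ˢ
          Ico ((p.2:ℝ)) ((p.2:ℝ) + (q:ℝ))).indicator (1 : ℝ × ℝ → ℝ≥0∞) y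
        = (q.toNat : ℝ≥0∞) * (q.toNat : ℝ≥0∞) := by
      intro y
      rw [ENNReal.tsum_prod']
      simp_rw [indicator_prod_one']
      rw [tsum_congr (fun p1 => ENNReal.tsum_mul_left), ENNReal.tsum_mul_right]
      rw [tsum_indicator_Ico q hq y.1, tsum_indicator_Ico q hq y.2]
    simp_rw [e2]
    rw [lintegral_const, Measure.restrict_apply_univ]
  rw [step3]
  -- Step 4: cancel constants
  have hc : ENNReal.ofReal |(q:ℝ)⁻¹| * (q.toNat : ℝ≥0∞) = 1 := by
    rw [abs_of_pos (inv_pos.mpr hq0), ENNReal.ofReal_inv_of_pos hq0]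
    have : ((q.toNat : ℕ) : ℝ≥0∞) = ENNReal.ofReal (q:ℝ) := by
      rw [← ENNReal.ofReal_natCast]
      congr 1
      exact_mod_cast Int.toNat_of_nonneg hq.le
    rw [this]
    exact ENNReal.inv_mul_cancel (ENNReal.ofReal_pos.mpr hq0).ne' ENNReal.ofReal_ne_top
  calc ENNReal.ofReal |(q:ℝ)⁻¹| * ENNReal.ofReal |(q:ℝ)⁻¹| *
        ((q.toNat : ℝ≥0∞) * (q.toNat : ℝ≥0∞) * volume S)
      = (ENNReal.ofReal |(q:ℝ)⁻¹| * (q.toNat : ℝ≥0∞)) *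
        ((ENNReal.ofReal |(q:ℝ)⁻¹| * (q.toNat : ℝ≥0∞)) * volume S) := by ring
    _ = volume S := by rw [hc]; ring

lemma card_eq_tsum {α : Type*} {s : Set α} (hs : s.Finite) :
    ((Nat.card s : ℕ) : ℝ≥0∞) = ∑' a : α, s.indicator (1 : α → ℝ≥0∞) a := by
  classical
  rw [tsum_eq_sum (s := hs.toFinset)
      (fun b hb => Set.indicator_of_notMem (by simpa using hb) _)]
  have : ∀ b ∈ hs.toFinset, s.indicator (1 : α → ℝ≥0∞) b = 1 := fun b hb => by
    simp [Set.indicator_of_mem (hs.mem_toFinset.mp hb)]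
  rw [Finset.sum_congr rfl this, Finset.sum_const, Nat.card_coe_set_eq,
    Set.ncard_eq_toFinset_card s hs]
  simp

lemma vol_S_ne_top (c : ℝ) :
    volume {u : ℝ × ℝ | |u.1 * u.2| ≤ c ∧ max |u.1| |u.2| ≤ 1 / 2} ≠ ⊤ := by
  have hsub : {u : ℝ × ℝ | |u.1 * u.2| ≤ c ∧ max |u.1| |u.2| ≤ 1 / 2}
      ⊆ Icc (-(1/2) : ℝ) (1/2) ×ˢ Icc (-(1/2) : ℝ) (1/2) := by
    rintro u ⟨-, h⟩
    exact ⟨abs_le.mp (le_trans (le_max_left _ _) h), abs_le.mp (le_trans (le_max_right _ _) h)⟩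
  refine ne_of_lt (lt_of_le_of_lt (measure_mono hsub) ?_)
  rw [Measure.volume_eq_prod, Measure.prod_prod]
  rw [Real.volume_Icc]
  exact ENNReal.mul_lt_top ENNReal.ofReal_lt_top ENNReal.ofReal_lt_top

lemma S_measurable (c : ℝ) :
    MeasurableSet {u : ℝ × ℝ | |u.1 * u.2| ≤ c ∧ max |u.1| |u.2| ≤ 1 / 2} := by
  have : {u : ℝ × ℝ | |u.1 * u.2| ≤ c ∧ max |u.1| |u.2| ≤ 1 / 2}
      = {u : ℝ × ℝ | |u.1 * u.2| ≤ c} ∩ {u : ℝ × ℝ | max |u.1| |u.2| ≤ 1 / 2} := rfl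
  rw [this]
  exact (measurableSet_le (by fun_prop) measurable_const).inter
    (measurableSet_le (by fun_prop) measurable_const)

lemma part1 (α T : ℝ) (hα : 0 < α) (hT : 1 ≤ T) :
    (∫ x in Set.Ico (0:ℝ) 1 ×ˢ Set.Ico (0:ℝ) 1,
        (Nat.card {pq : (ℤ × ℤ) × ℤ //
          |((pq.1.1 : ℝ) + pq.2 * x.1) * ((pq.1.2 : ℝ) + pq.2 * x.2)| * (pq.2 : ℝ) ≤ α ∧
          max |(pq.1.1 : ℝ) + pq.2 * x.1| |(pq.1.2 : ℝ) + pq.2 * x.2| ≤ 1 / 2 ∧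
          1 ≤ (pq.2 : ℝ) ∧ (pq.2 : ℝ) ≤ T} : ℝ))
      = ∑ q ∈ Finset.Icc 1 ⌊T⌋₊,
          (volume {u : ℝ × ℝ | |u.1 * u.2| ≤ α / q ∧ max |u.1| |u.2| ≤ 1 / 2}).toReal := by
  have hT0 : (0:ℝ) ≤ T := by linarith
  set box : Set (ℝ × ℝ) := Set.Ico (0:ℝ) 1 ×ˢ Set.Ico (0:ℝ) 1 with hbox
  set s : ℝ × ℝ → Set ((ℤ × ℤ) × ℤ) := fun x =>
    {pq | |((pq.1.1 : ℝ) + pq.2 * x.1) * ((pq.1.2 : ℝ) + pq.2 * x.2)| * (pq.2 : ℝ) ≤ α ∧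
      max |(pq.1.1 : ℝ) + pq.2 * x.1| |(pq.1.2 : ℝ) + pq.2 * x.2| ≤ 1 / 2 ∧
      1 ≤ (pq.2 : ℝ) ∧ (pq.2 : ℝ) ≤ T} with hs
  set S : ℕ → Set (ℝ × ℝ) := fun n =>
    {u : ℝ × ℝ | |u.1 * u.2| ≤ α / n ∧ max |u.1| |u.2| ≤ 1 / 2} with hSdef
  -- finiteness
  have hfin : ∀ x : ℝ × ℝ, (s x).Finite := by
    intro x
    set R : ℤ := ⌈T⌉ * (⌈|x.1|⌉ + ⌈|x.2|⌉ + 1) + 1 with hR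
    apply Set.Finite.subset (((Finset.Icc (-R) R ×ˢ Finset.Icc (-R) R) ×ˢ
      Finset.Icc 1 ⌈T⌉).finite_toSet)
    rintro ⟨⟨p₁, p₂⟩, k⟩ ⟨h1, h2, h3, h4⟩
    have hkr : (1:ℝ) ≤ (k:ℝ) := h3
    have hkr2 : (k:ℝ) ≤ (⌈T⌉:ℝ) := h4.trans (Int.le_ceil T)
    have hx1 : |x.1| ≤ (⌈|x.1|⌉:ℝ) := Int.le_ceil _
    have hx2 : |x.2| ≤ (⌈|x.2|⌉:ℝ) := Int.le_ceil _
    have hx1' : (0:ℝ) ≤ |x.1| := abs_nonneg _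
    have hx2' : (0:ℝ) ≤ |x.2| := abs_nonneg _
    have key : ∀ (p : ℤ) (t : ℝ), |(p:ℝ) + (k:ℝ) * t| ≤ 1/2 →
        |t| ≤ (⌈|x.1|⌉:ℝ) + (⌈|x.2|⌉:ℝ) → p ∈ Finset.Icc (-R) R := by
      intro p t hpt htb
      have h6 : |(k:ℝ) * t| = (k:ℝ) * |t| := by
        rw [abs_mul, abs_of_pos (by linarith : (0:ℝ) < (k:ℝ))]
      have h7 := abs_add_le ((p:ℝ) + (k:ℝ) * t) (-((k:ℝ) * t))
      simp only [add_neg_cancel_right, abs_neg] at h7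
      rw [h6] at h7
      have h5 : |(p:ℝ)| ≤ 1/2 + (k:ℝ) * |t| := by linarith
      have h9 : (k:ℝ) * |t| ≤ (⌈T⌉:ℝ) * ((⌈|x.1|⌉:ℝ) + (⌈|x.2|⌉:ℝ)) :=
        mul_le_mul hkr2 htb (abs_nonneg t) (by linarith)
      have h8 : |(p:ℝ)| ≤ (R:ℝ) := by
        have hRr : (R:ℝ) = (⌈T⌉:ℝ) * ((⌈|x.1|⌉:ℝ) + (⌈|x.2|⌉:ℝ) + 1) + 1 := by
          rw [hR]; push_cast; ring
        nlinarith
      have h10 := abs_le.mp h8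
      refine Finset.mem_Icc.mpr ⟨?_, ?_⟩
      · exact_mod_cast h10.1
      · exact_mod_cast h10.2
    have hk1 : (1:ℤ) ≤ k := by exact_mod_cast hkr
    have hk2 : k ≤ ⌈T⌉ := by exact_mod_cast hkr2
    simp only [Finset.coe_product, Set.mem_prod, Finset.mem_coe, Finset.mem_Icc]
    exact ⟨⟨Finset.mem_Icc.mp (key p₁ x.1 (le_trans (le_max_left _ _) h2) (by linarith)),
      Finset.mem_Icc.mp (key p₂ x.2 (le_trans (le_max_right _ _) h2) (by linarith))⟩,
      hk1, hk2⟩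
  -- measurability
  have hmeas : ∀ pq : (ℤ × ℤ) × ℤ, MeasurableSet {x : ℝ × ℝ | pq ∈ s x} := by
    intro pq
    by_cases hq : 1 ≤ (pq.2:ℝ) ∧ (pq.2:ℝ) ≤ T
    · have he : {x : ℝ × ℝ | pq ∈ s x} =
        {x : ℝ × ℝ | |((pq.1.1 : ℝ) + pq.2 * x.1) * ((pq.1.2 : ℝ) + pq.2 * x.2)| * (pq.2:ℝ) ≤ α}
        ∩ {x : ℝ × ℝ | max |(pq.1.1 : ℝ) + pq.2 * x.1| |(pq.1.2 : ℝ) + pq.2 * x.2| ≤ 1/2} := by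
        ext x
        simp only [hs, Set.mem_setOf_eq, Set.mem_inter_iff]
        tauto
      rw [he]
      exact (measurableSet_le (by fun_prop) measurable_const).inter
        (measurableSet_le (by fun_prop) measurable_const)
    · have he : {x : ℝ × ℝ | pq ∈ s x} = (∅ : Set (ℝ × ℝ)) := by
        ext x
        simp only [hs, Set.mem_setOf_eq, Set.mem_empty_iff_false, iff_false]
        tauto
      rw [he]
      exact MeasurableSet.empty
  -- counting function as tsum
  have hsum : ∀ x : ℝ × ℝ, ((Nat.card (s x) : ℕ) : ℝ≥0∞)
      = ∑' pq : (ℤ × ℤ) × ℤ, {x' : ℝ × ℝ | pq ∈ s x'}.indicator (1 : ℝ × ℝ → ℝ≥0∞) x := by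
    intro x
    rw [card_eq_tsum (hfin x)]
    exact tsum_congr fun pq => by simp [Set.indicator_apply]
  set g : ℝ × ℝ → ℝ≥0∞ := fun x =>
    ∑' pq : (ℤ × ℤ) × ℤ, {x' : ℝ × ℝ | pq ∈ s x'}.indicator (1 : ℝ × ℝ → ℝ≥0∞) x with hg
  have hgmeas : Measurable g :=
    Measurable.ennreal_tsum fun pq => measurable_one.indicator (hmeas pq)
  have hgx : ∀ x, g x = ((Nat.card (s x) : ℕ) : ℝ≥0∞) := fun x => (hsum x).symm
  have hstep1 : (∫ x in box, (Nat.card (s x) : ℝ)) = (∫⁻ x in box, g x).toReal := by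
    have heq : ∀ x : ℝ × ℝ, (Nat.card (s x) : ℝ) = (g x).toReal := fun x => by
      rw [hgx x]; simp
    calc (∫ x in box, (Nat.card (s x) : ℝ)) = ∫ x in box, (g x).toReal :=
          integral_congr_ae (Filter.Eventually.of_forall fun x => heq x)
      _ = (∫⁻ x in box, g x).toReal :=
          integral_toReal hgmeas.aemeasurable
            (Filter.Eventually.of_forall fun x => by
              rw [hgx x]; exact ENNReal.natCast_lt_top _)
  have hstep2 : (∫⁻ x in box, g x)
      = ∑' pq : (ℤ × ℤ) × ℤ, volume ({x' : ℝ × ℝ | pq ∈ s x'} ∩ box) := by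
    rw [hg, lintegral_tsum (fun pq => (measurable_one.indicator (hmeas pq)).aemeasurable)]
    exact tsum_congr fun pq => by
      rw [lintegral_indicator_one (hmeas pq), Measure.restrict_apply (hmeas pq)]
  -- per-q set identity
  have hsetid : ∀ n : ℕ, n ∈ Finset.Icc 1 ⌊T⌋₊ → ∀ p : ℤ × ℤ,
      {x' : ℝ × ℝ | (((p, ((n:ℕ):ℤ)) : (ℤ × ℤ) × ℤ)) ∈ s x'} ∩ box
      = box ∩ (fun x : ℝ × ℝ =>
          ((((n:ℕ):ℤ):ℝ) * x.1 + (p.1:ℝ), (((n:ℕ):ℤ):ℝ) * x.2 + (p.2:ℝ))) ⁻¹' S n := by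
    intro n hn p
    obtain ⟨hn1, hn2⟩ := Finset.mem_Icc.mp hn
    have hnr : (0:ℝ) < ((n:ℕ):ℝ) := by exact_mod_cast hn1
    have hnT : ((n:ℕ):ℝ) ≤ T :=
      le_trans (Nat.cast_le.mpr hn2) (Nat.floor_le hT0)
    ext x
    simp only [hs, hSdef, Set.mem_setOf_eq, Set.mem_inter_iff, Set.mem_preimage]
    constructor
    · rintro ⟨⟨h1, h2, -, -⟩, hb⟩
      refine ⟨hb, ?_, ?_⟩
      · rw [le_div_iff₀ hnr]
        push_cast at h1 ⊢
        ring_nf at h1 ⊢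
        exact h1
      · push_cast at h2 ⊢
        ring_nf at h2 ⊢
        exact h2
    · rintro ⟨hb, h1, h2⟩
      rw [le_div_iff₀ hnr] at h1
      refine ⟨⟨?_, ?_, by push_cast; exact_mod_cast Nat.one_le_cast.mpr hn1, by push_cast; exact hnT⟩, hb⟩
      · push_cast at h1 ⊢
        ring_nf at h1 ⊢
        exact h1
      · push_cast at h2 ⊢
        ring_nf at h2 ⊢
        exact h2
  have hunfold : ∀ n ∈ Finset.Icc 1 ⌊T⌋₊,
      (∑' p : ℤ × ℤ, volume ({x' : ℝ × ℝ | (((p, ((n:ℕ):ℤ)) : (ℤ × ℤ) × ℤ)) ∈ s x'} ∩ box))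
        = volume (S n) := by
    intro n hn
    rw [tsum_congr (fun p => by rw [hsetid n hn p])]
    exact unfold_sum ((n:ℕ):ℤ)
      (by exact_mod_cast Nat.pos_of_ne_zero (by
        have := (Finset.mem_Icc.mp hn).1; omega))
      (S_measurable _)
  have hzero : ∀ k : ℤ,
      k ∉ Finset.map ⟨(Nat.cast : ℕ → ℤ), (fun a b h => by exact_mod_cast h : Function.Injective (Nat.cast : ℕ → ℤ))⟩ (Finset.Icc 1 ⌊T⌋₊) →
      (∑' p : ℤ × ℤ, volume ({x' : ℝ × ℝ | (((p, k) : (ℤ × ℤ) × ℤ)) ∈ s x'} ∩ box)) = 0 := by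
    intro k hk
    have hempty : ∀ p : ℤ × ℤ, {x' : ℝ × ℝ | (((p, k) : (ℤ × ℤ) × ℤ)) ∈ s x'} = ∅ := by
      intro p
      ext x
      simp only [hs, Set.mem_setOf_eq, Set.mem_empty_iff_false, iff_false]
      rintro ⟨-, -, h3, h4⟩
      apply hk
      have hk1 : (1:ℤ) ≤ k := by exact_mod_cast h3
      simp only [Finset.mem_map, Finset.mem_Icc, Function.Embedding.coeFn_mk]
      refine ⟨k.toNat, ⟨by omega, Nat.le_floor ?_⟩, Int.toNat_of_nonneg (by omega)⟩
      rw [show ((k.toNat : ℕ):ℝ) = (k:ℝ) by exact_mod_cast congrArg (Int.cast : ℤ → ℝ) (Int.toNat_of_nonneg (by omega : (0:ℤ) ≤ k))]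
      exact h4
    simp [hempty]
  have hstep3 : (∑' pq : (ℤ × ℤ) × ℤ, volume ({x' : ℝ × ℝ | pq ∈ s x'} ∩ box))
      = ∑ n ∈ Finset.Icc 1 ⌊T⌋₊, volume (S n) := by
    rw [ENNReal.tsum_prod', ENNReal.tsum_comm,
      tsum_eq_sum (s := Finset.map ⟨(Nat.cast : ℕ → ℤ), (fun a b h => by exact_mod_cast h : Function.Injective (Nat.cast : ℕ → ℤ))⟩
        (Finset.Icc 1 ⌊T⌋₊)) hzero, Finset.sum_map]
    exact Finset.sum_congr rfl fun n hn => hunfold n hn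
  have main : (∫ x in box, (Nat.card (s x) : ℝ))
      = ∑ n ∈ Finset.Icc 1 ⌊T⌋₊, (volume (S n)).toReal := by
    rw [hstep1, hstep2, hstep3, ENNReal.toReal_sum (fun n hn => vol_S_ne_top _)]
  exact main

lemma vol_Cplus (γ : ℝ) (hγ : 0 < γ) (h4 : 4 * γ ≤ 1) :
    volume {u : ℝ × ℝ | u.1 ∈ Icc (2*γ) (1/2) ∧ |u.2| ≤ γ / u.1}
      = ENNReal.ofReal (2 * γ * (- Real.log (4 * γ))) := by
  have hC : MeasurableSet {u : ℝ × ℝ | u.1 ∈ Icc (2*γ) (1/2) ∧ |u.2| ≤ γ / u.1} := by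
    have : {u : ℝ × ℝ | u.1 ∈ Icc (2*γ) (1/2) ∧ |u.2| ≤ γ / u.1}
        = (Prod.fst ⁻¹' Icc (2*γ) (1/2)) ∩ {u : ℝ × ℝ | |u.2| ≤ γ / u.1} := rfl
    rw [this]
    exact (measurable_fst measurableSet_Icc).inter
      (measurableSet_le (by fun_prop) (measurable_const.div measurable_fst))
  rw [Measure.volume_eq_prod, Measure.prod_apply hC]
  have hslice : ∀ t : ℝ, volume (Prod.mk t ⁻¹' {u : ℝ × ℝ | u.1 ∈ Icc (2*γ) (1/2) ∧ |u.2| ≤ γ / u.1})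
      = (Icc (2*γ) (1/2)).indicator (fun t => ENNReal.ofReal (2*(γ/t))) t := by
    intro t
    by_cases ht : t ∈ Icc (2*γ) (1/2)
    · have he : Prod.mk t ⁻¹' {u : ℝ × ℝ | u.1 ∈ Icc (2*γ) (1/2) ∧ |u.2| ≤ γ / u.1}
          = Icc (-(γ/t)) (γ/t) := by
        ext y
        simp only [Set.mem_preimage, Set.mem_setOf_eq, Set.mem_Icc, abs_le]
        exact ⟨fun h => h.2, fun h => ⟨⟨ht.1, ht.2⟩, h⟩⟩
      rw [he, Real.volume_Icc, Set.indicator_of_mem ht]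
      congr 1
      ring
    · have he : Prod.mk t ⁻¹' {u : ℝ × ℝ | u.1 ∈ Icc (2*γ) (1/2) ∧ |u.2| ≤ γ / u.1}
          = (∅ : Set ℝ) := by
        ext y
        simp only [Set.mem_preimage, Set.mem_setOf_eq, Set.mem_empty_iff_false, iff_false]
        exact fun h => ht h.1
      rw [he, Set.indicator_of_notMem ht]
      simp
  rw [lintegral_congr hslice, lintegral_indicator measurableSet_Icc]
  have h2γ : (0:ℝ) < 2*γ := by linarith
  have hle : 2*γ ≤ 1/2 := by linarith
  have hint : IntegrableOn (fun t : ℝ => 2*(γ/t)) (Icc (2*γ) (1/2)) := by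
    apply ContinuousOn.integrableOn_compact isCompact_Icc
    apply continuousOn_const.mul
    apply continuousOn_const.div continuousOn_id
    intro t ht
    exact ne_of_gt (lt_of_lt_of_le h2γ ht.1)
  have hnn : 0 ≤ᵐ[volume.restrict (Icc (2*γ) (1/2))] (fun t : ℝ => 2*(γ/t)) := by
    refine (ae_restrict_iff' measurableSet_Icc).mpr (Filter.Eventually.of_forall fun t ht => ?_)
    have : (0:ℝ) < t := lt_of_lt_of_le h2γ ht.1
    positivity
  rw [← ofReal_integral_eq_lintegral_ofReal hint hnn]
  congr 1
  rw [MeasureTheory.integral_Icc_eq_integral_Ioc,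
    ← intervalIntegral.integral_of_le hle]
  have : ∀ t : ℝ, 2*(γ/t) = (2*γ) * t⁻¹ := fun t => by ring
  simp_rw [this]
  rw [intervalIntegral.integral_const_mul, integral_inv_of_pos h2γ (by norm_num : (0:ℝ) < 1/2)]
  have : (1/2 : ℝ) / (2*γ) = (4*γ)⁻¹ := by
    rw [div_eq_iff (ne_of_gt h2γ), inv_mul_eq_div, eq_div_iff (by positivity : (4:ℝ)*γ ≠ 0)]
    ring
  rw [this, Real.log_inv]

lemma vol_bound (γ : ℝ) (hγ : 0 < γ) (h4 : 4 * γ ≤ 1) :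
    (volume {u : ℝ × ℝ | |u.1 * u.2| ≤ γ ∧ max |u.1| |u.2| ≤ 1 / 2}).toReal
      ≤ 8 * γ * (1 - Real.log (4 * γ)) := by
  set L : ℝ := - Real.log (4 * γ) with hLdef
  have hL : 0 ≤ L := by
    rw [hLdef, neg_nonneg]
    exact Real.log_nonpos (by linarith) (by linarith)
  set A : Set (ℝ × ℝ) := Icc (-(2*γ)) (2*γ) ×ˢ Icc (-(1/2):ℝ) (1/2) with hA
  set Cp : Set (ℝ × ℝ) := {u : ℝ × ℝ | u.1 ∈ Icc (2*γ) (1/2) ∧ |u.2| ≤ γ / u.1} with hCp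
  set Cm : Set (ℝ × ℝ) := (fun u : ℝ × ℝ => (-u.1, u.2)) ⁻¹' Cp with hCm
  have hCpmeas : MeasurableSet Cp := by
    have : Cp = (Prod.fst ⁻¹' Icc (2*γ) (1/2)) ∩ {u : ℝ × ℝ | |u.2| ≤ γ / u.1} := rfl
    rw [this]
    exact (measurable_fst measurableSet_Icc).inter
      (measurableSet_le (by fun_prop) (measurable_const.div measurable_fst))
  have hsub : {u : ℝ × ℝ | |u.1 * u.2| ≤ γ ∧ max |u.1| |u.2| ≤ 1 / 2} ⊆ A ∪ (Cp ∪ Cm) := by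
    rintro u ⟨h1, h2⟩
    have hu1 : |u.1| ≤ 1/2 := le_trans (le_max_left _ _) h2
    have hu2 : |u.2| ≤ 1/2 := le_trans (le_max_right _ _) h2
    by_cases hc : |u.1| ≤ 2*γ
    · exact Or.inl ⟨abs_le.mp hc, abs_le.mp hu2⟩
    · push_neg at hc
      have habs : (0:ℝ) < |u.1| := by linarith
      have hy : |u.2| ≤ γ / |u.1| := by
        rw [le_div_iff₀ habs]
        rw [abs_mul] at h1
        linarith [mul_comm |u.2| |u.1| ▸ h1]
      rcases le_or_gt 0 u.1 with hpos | hneg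
      · refine Or.inr (Or.inl ⟨⟨?_, ?_⟩, ?_⟩)
        · rw [abs_of_nonneg hpos] at hc; linarith
        · rw [abs_of_nonneg hpos] at hu1; linarith
        · rwa [abs_of_nonneg hpos] at hy
      · refine Or.inr (Or.inr ?_)
        simp only [hCm, Set.mem_preimage, hCp, Set.mem_setOf_eq]
        rw [abs_of_neg hneg] at hc hu1 hy
        exact ⟨⟨by linarith, by linarith⟩, hy⟩
  have hAvol : volume A = ENNReal.ofReal (4*γ) := by
    rw [hA, Measure.volume_eq_prod, Measure.prod_prod, Real.volume_Icc, Real.volume_Icc]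
    rw [show (2*γ - -(2*γ)) = 4*γ by ring, show ((1:ℝ)/2 - -(1/2)) = 1 by ring,
      ENNReal.ofReal_one, mul_one]
  have hCmvol : volume Cm = volume Cp := by
    have hmp : MeasurePreserving (fun u : ℝ × ℝ => (-u.1, u.2)) volume volume := by
      have h1 : MeasurePreserving (fun x : ℝ => -x) volume volume :=
        ⟨measurable_neg, Measure.map_neg_eq_self _⟩
      have := h1.prod (MeasurePreserving.id (volume : Measure ℝ))
      rwa [← Measure.volume_eq_prod] at this
    exact hmp.measure_preimage hCpmeas.nullMeasurableSet
  have hCpvol : volume Cp = ENNReal.ofReal (2 * γ * L) := vol_Cplus γ hγ h4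
  have htot : volume {u : ℝ × ℝ | |u.1 * u.2| ≤ γ ∧ max |u.1| |u.2| ≤ 1 / 2}
      ≤ ENNReal.ofReal (4*γ + (2*γ*L + 2*γ*L)) := by
    refine le_trans (measure_mono hsub) (le_trans (measure_union_le _ _) ?_)
    refine le_trans (add_le_add le_rfl (measure_union_le _ _)) ?_
    rw [hAvol, hCmvol, hCpvol]
    rw [ENNReal.ofReal_add (by linarith) (by nlinarith), ENNReal.ofReal_add (by nlinarith) (by nlinarith)]
  refine le_trans (ENNReal.toReal_le_of_le_ofReal (by nlinarith) htot) ?_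
  have : 8 * γ * (1 - Real.log (4*γ)) = 8*γ*(1 + L) := by rw [hLdef]; ring
  rw [this]
  nlinarith

lemma harmonic_sum_le (N : ℕ) : ∑ q ∈ Finset.Icc 1 N, ((q:ℝ))⁻¹ ≤ 1 + Real.log N := by
  have h1 : ∑ q ∈ Finset.Icc 1 N, ((q:ℝ))⁻¹ = ((harmonic N : ℚ) : ℝ) := by
    simp only [harmonic_eq_sum_Icc, Rat.cast_sum, Rat.cast_inv, Rat.cast_natCast]
  rw [h1]
  exact harmonic_le_one_add_log N

lemma part2 (αv T : ℝ) (hα : 0 < αv) (hT : 3 ≤ T) (h4 : 4 * αv ≤ 1) :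
    (∑ q ∈ Finset.Icc 1 ⌊T⌋₊,
        (volume {u : ℝ × ℝ | |u.1 * u.2| ≤ αv / q ∧ max |u.1| |u.2| ≤ 1 / 2}).toReal)
      ≤ 16 * (Real.log T * (αv * (1 - Real.log (4 * αv))) + (Real.log T) ^ 2 * αv) := by
  have hT0 : (0:ℝ) ≤ T := by linarith
  have hlogT : 1 ≤ Real.log T := by
    have h3 : Real.exp 1 ≤ 3 := by
      have := Real.exp_one_lt_d9
      linarith
    calc (1:ℝ) = Real.log (Real.exp 1) := (Real.log_exp 1).symm
      _ ≤ Real.log T := Real.log_le_log (Real.exp_pos 1) (by linarith)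
  set N := ⌊T⌋₊ with hN
  have hL4 : Real.log (4*αv) ≤ 0 := Real.log_nonpos (by linarith) h4
  set K : ℝ := 8 * αv * (1 - Real.log (4*αv)) + 8 * αv * Real.log T with hK
  have hKpos : 0 ≤ K := by nlinarith
  have hterm : ∀ q ∈ Finset.Icc 1 N,
      (volume {u : ℝ × ℝ | |u.1 * u.2| ≤ αv / q ∧ max |u.1| |u.2| ≤ 1 / 2}).toReal
        ≤ K * ((q:ℝ))⁻¹ := by
    intro q hq
    obtain ⟨hq1, hq2⟩ := Finset.mem_Icc.mp hq
    have hqr : (1:ℝ) ≤ (q:ℝ) := by exact_mod_cast hq1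
    have hq0 : (0:ℝ) < (q:ℝ) := by linarith
    have hqT : (q:ℝ) ≤ T := le_trans (Nat.cast_le.mpr hq2) (Nat.floor_le hT0)
    have hγ : 0 < αv/(q:ℝ) := by positivity
    have h4γ : 4 * (αv/(q:ℝ)) ≤ 1 := by
      have := div_le_self hα.le hqr
      linarith
    refine le_trans (vol_bound (αv/(q:ℝ)) hγ h4γ) ?_
    have hlog : Real.log (4*(αv/(q:ℝ))) = Real.log (4*αv) - Real.log (q:ℝ) := by
      rw [show 4*(αv/(q:ℝ)) = (4*αv)/(q:ℝ) by ring,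
        Real.log_div (by positivity) (by positivity)]
    rw [hlog]
    have hlogq : Real.log (q:ℝ) ≤ Real.log T := Real.log_le_log hq0 hqT
    have hlogq0 : 0 ≤ Real.log (q:ℝ) := Real.log_nonneg hqr
    have expand : 8*(αv/(q:ℝ))*(1 - (Real.log (4*αv) - Real.log (q:ℝ)))
        = (8*αv*(1 - Real.log (4*αv)) + 8*αv*Real.log (q:ℝ)) * ((q:ℝ))⁻¹ := by
      field_simp
      ring
    rw [expand, hK]
    apply mul_le_mul_of_nonneg_right _ (by positivity)
    nlinarith
  calc (∑ q ∈ Finset.Icc 1 N,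
        (volume {u : ℝ × ℝ | |u.1 * u.2| ≤ αv / q ∧ max |u.1| |u.2| ≤ 1 / 2}).toReal)
      ≤ ∑ q ∈ Finset.Icc 1 N, K * ((q:ℝ))⁻¹ := Finset.sum_le_sum hterm
    _ = K * ∑ q ∈ Finset.Icc 1 N, ((q:ℝ))⁻¹ := by rw [Finset.mul_sum]
    _ ≤ K * (1 + Real.log N) :=
        mul_le_mul_of_nonneg_left (harmonic_sum_le N) hKpos
    _ ≤ K * (2 * Real.log T) := by
        have hlogN : Real.log (N:ℝ) ≤ Real.log T := by
          rcases Nat.eq_zero_or_pos N with h0 | hpos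
          · rw [h0]
            simp only [Nat.cast_zero, Real.log_zero]
            linarith
          · exact Real.log_le_log (by exact_mod_cast hpos) (Nat.floor_le hT0)
        apply mul_le_mul_of_nonneg_left _ hKpos
        linarith
    _ ≤ 16 * (Real.log T * (αv * (1 - Real.log (4*αv))) + (Real.log T) ^ 2 * αv) := by
        rw [hK]
        apply le_of_eq
        ring


theorem mean_count_strip (a : ℝ → ℝ) (ha : ∀ T, 0 < a T) :
    ∃ C : ℝ, 0 < C ∧ ∃ T₀ : ℝ, ∀ T ≥ T₀,
      ((∫ x in Set.Ico (0:ℝ) 1 ×ˢ Set.Ico (0:ℝ) 1,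
          (Nat.card {pq : (ℤ × ℤ) × ℤ //
            |((pq.1.1 : ℝ) + pq.2 * x.1) * ((pq.1.2 : ℝ) + pq.2 * x.2)| * (pq.2 : ℝ) ≤ a T ∧
            max |(pq.1.1 : ℝ) + pq.2 * x.1| |(pq.1.2 : ℝ) + pq.2 * x.2| ≤ 1 / 2 ∧
            1 ≤ (pq.2 : ℝ) ∧ (pq.2 : ℝ) ≤ T} : ℝ))
        = ∑ q ∈ Finset.Icc 1 ⌊T⌋₊,
            (volume {u : ℝ × ℝ | |u.1 * u.2| ≤ a T / q ∧ max |u.1| |u.2| ≤ 1 / 2}).toReal) ∧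
      (4 * a T ≤ 1 →
        (∑ q ∈ Finset.Icc 1 ⌊T⌋₊,
            (volume {u : ℝ × ℝ | |u.1 * u.2| ≤ a T / q ∧ max |u.1| |u.2| ≤ 1 / 2}).toReal)
          ≤ C * (Real.log T * (a T * (1 - Real.log (4 * a T)))
              + (Real.log T) ^ 2 * a T)) := by
  exact ⟨16, by norm_num, 3, fun T hT =>
    ⟨part1 (a T) T (ha T) (by linarith), fun h4 => part2 (a T) T (ha T) hT h4⟩⟩
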